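/- Let f : ([0,1]^d)^N → ℝ be a totally symmetric function that is Lipschitz with constant L with respect to the ℓ∞ norm on ℝ^{Nd}, i.e. |f(X) − f(X')| ≤ L·max_{i,α} |x_{i,α} − x'_{i,α}|. Then there is a constant C > 0 (depending on f, N, d but not on ε) such that for every sufficiently small ε > 0 there exist a natural number M, a function g : ℝ^d → ℝ^M and a function φ : ℝ^M → ℝ such that |f(x_1,…,x_N) − φ(∑_{j=1}^N g(x_j))| ≤ ε for all (x_1,…,x_N) ∈ ([0,1]^d)^N, with M ≤ C · 2^N L^{Nd} / (ε^{Nd} · N!). -/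

import Mathlib

open Finset in
lemma exists_perm_comp_eq {α : Type*} [DecidableEq α] :
    ∀ {n : ℕ} (a b : Fin n → α), List.Perm (List.ofFn a) (List.ofFn b) →
      ∃ σ : Equiv.Perm (Fin n), b ∘ σ = a := by
  intro n
  induction n with
  | zero => exact fun a b _ => ⟨1, funext fun i => i.elim0⟩
  | succ n ih =>
    intro a b h
    have h0 : a 0 ∈ List.ofFn b := by
      refine h.mem_iff.mp ?_
      rw [List.mem_ofFn]
      exact ⟨0, rfl⟩
    rw [List.mem_ofFn] at h0
    obtain ⟨k, hk⟩ := h0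
    set b' : Fin (n + 1) → α := b ∘ (Equiv.swap 0 k) with hb'def
    have hb'0 : b' 0 = a 0 := by simp [hb'def, Equiv.swap_apply_left, hk]
    have hperm : List.Perm (List.ofFn a) (List.ofFn b') :=
      h.trans ((Equiv.Perm.ofFn_comp_perm (Equiv.swap 0 k) b).symm)
    rw [List.ofFn_succ, List.ofFn_succ, ← hb'0] at hperm
    rw [hb'0] at hperm
    have htail : List.Perm (List.ofFn (fun i : Fin n => a i.succ))
        (List.ofFn (fun i : Fin n => b' i.succ)) := hperm.cons_inv
    obtain ⟨τ, hτ⟩ := ih _ _ htail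
    refine ⟨(Equiv.Perm.decomposeFin.symm (0, τ)).trans (Equiv.swap 0 k), ?_⟩
    funext i
    induction i using Fin.cases with
    | zero =>
      simp only [Function.comp_apply, Equiv.trans_apply,
        Equiv.Perm.decomposeFin_symm_apply_zero]
      simpa [hb'def] using hb'0
    | succ j =>
      have := congrFun hτ j
      simp only [Function.comp_apply] at this ⊢
      simp only [Equiv.trans_apply, Equiv.Perm.decomposeFin_symm_apply_succ,
        Equiv.swap_self, Equiv.refl_apply]
      exact this

open Finset in
lemma multiset_map_univ_eq_ofFn {α : Type*} {n : ℕ} (a : Fin n → α) :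
    Multiset.map a Finset.univ.val = (List.ofFn a : Multiset α) := by
  rw [Fin.univ_def]
  simp [List.ofFn_eq_map]

open Finset in
lemma exists_perm_of_card_eq {α : Type*} [DecidableEq α] {n : ℕ} (a b : Fin n → α)
    (h : ∀ x, (Finset.univ.filter fun j => a j = x).card
        = (Finset.univ.filter fun j => b j = x).card) :
    ∃ σ : Equiv.Perm (Fin n), b ∘ σ = a := by
  apply exists_perm_comp_eq
  rw [← Multiset.coe_eq_coe, ← multiset_map_univ_eq_ofFn, ← multiset_map_univ_eq_ofFn]
  ext x
  rw [Multiset.count_map, Multiset.count_map]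
  have h1 : ∀ c : Fin n → α, Multiset.card (Multiset.filter (fun j => x = c j) univ.val)
      = (Finset.univ.filter fun j => c j = x).card := by
    intro c
    rw [Finset.card_def, Finset.filter_val]
    congr 1
    exact Multiset.filter_congr (fun j _ => by constructor <;> (intro hh; exact hh.symm))
  rw [h1 a, h1 b]
  exact h x

lemma round_bounds {K : ℕ} (hK : 0 < K) {t : ℝ} (ht : t ∈ Set.Icc (0:ℝ) 1) :
    ((min ⌊t * K⌋₊ (K - 1) : ℕ) : ℝ) ≤ t * K ∧ t * K ≤ (min ⌊t * K⌋₊ (K - 1) : ℕ) + 1 := by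
  have htK : (0:ℝ) ≤ t * K := mul_nonneg ht.1 (by positivity)
  constructor
  · calc ((min ⌊t * K⌋₊ (K - 1) : ℕ) : ℝ) ≤ (⌊t * K⌋₊ : ℝ) := by
          exact_mod_cast Nat.cast_le.mpr (min_le_left _ _)
      _ ≤ t * K := Nat.floor_le htK
  · rcases le_or_gt ⌊t * K⌋₊ (K - 1) with hc | hc
    · rw [min_eq_left hc]
      exact (Nat.lt_floor_add_one (t * K)).le
    · rw [min_eq_right hc.le]
      have : t * K ≤ K := by
        nlinarith [ht.2, (Nat.cast_pos (α := ℝ)).mpr hK]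
      have hK1 : ((K - 1 : ℕ) : ℝ) + 1 = (K : ℝ) := by
        have := Nat.succ_pred_eq_of_pos hK
        exact_mod_cast congrArg (Nat.cast (R := ℝ)) this
      linarith

lemma round_close {K : ℕ} (hK : 0 < K) {t t' : ℝ} (ht : t ∈ Set.Icc (0:ℝ) 1)
    (ht' : t' ∈ Set.Icc (0:ℝ) 1)
    (h : min ⌊t * K⌋₊ (K - 1) = min ⌊t' * K⌋₊ (K - 1)) : |t - t'| ≤ 1 / K := by
  have hKR : (0:ℝ) < K := by exact_mod_cast hK
  obtain ⟨l1, u1⟩ := round_bounds hK ht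
  obtain ⟨l2, u2⟩ := round_bounds hK ht'
  rw [h] at l1 u1
  rw [abs_sub_le_iff]
  constructor
  · rw [le_div_iff₀ hKR]
    nlinarith
  · rw [le_div_iff₀ hKR]
    nlinarith

/-- If `f : ([0,1]^d)^N → ℝ` is totally symmetric and Lipschitz with constant `L`
with respect to the `ℓ∞` norm on `ℝ^{Nd}`, then there is `C > 0` such that for all
sufficiently small `ε > 0`, `f` is `ε`-approximated on the cube in the form
`φ(∑ⱼ g(xⱼ))` with `M ≤ C · 2^N L^{Nd} / (ε^{Nd} · N!)` feature variables.
(The norm on `Fin N → Fin d → ℝ` below is the sup norm over all `Nd` coordinates.) -/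
theorem symmetric_universal_approximation_linfty_lipschitz
    (d N : ℕ) (f : (Fin N → Fin d → ℝ) → ℝ) (L : ℝ) (hL : 0 ≤ L)
    (hsym : ∀ (σ : Equiv.Perm (Fin N)) (X : Fin N → Fin d → ℝ),
      (∀ i α, X i α ∈ Set.Icc (0 : ℝ) 1) → f (X ∘ σ) = f X)
    (hlip : ∀ X X' : Fin N → Fin d → ℝ,
      (∀ i α, X i α ∈ Set.Icc (0 : ℝ) 1) → (∀ i α, X' i α ∈ Set.Icc (0 : ℝ) 1) →
      |f X - f X'| ≤ L * ‖X - X'‖) :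
    ∃ C : ℝ, 0 < C ∧ ∃ ε₀ : ℝ, 0 < ε₀ ∧
      ∀ ε : ℝ, 0 < ε → ε < ε₀ →
        ∃ (M : ℕ) (g : (Fin d → ℝ) → Fin M → ℝ) (φ : (Fin M → ℝ) → ℝ),
          (∀ X : Fin N → Fin d → ℝ, (∀ i α, X i α ∈ Set.Icc (0 : ℝ) 1) →
            |f X - φ (∑ j, g (X j))| ≤ ε) ∧
          (M : ℝ) ≤ C * 2 ^ N * L ^ (N * d) / (ε ^ (N * d) * (Nat.factorial N)) := by
  classical
  by_cases hdeg : L = 0 ∨ N * d = 0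
  · -- degenerate case: f is constant on the cube
    refine ⟨1, one_pos, 1, one_pos, fun ε hε _ => ?_⟩
    set X₀ : Fin N → Fin d → ℝ := fun _ _ => 0 with hX₀def
    have hX₀ : ∀ i α, X₀ i α ∈ Set.Icc (0:ℝ) 1 := fun i α => ⟨le_refl _, zero_le_one⟩
    refine ⟨0, fun _ i => i.elim0, fun _ => f X₀, ?_, ?_⟩
    · intro X hX
      have hb := hlip X X₀ hX hX₀
      rcases hdeg with hL0 | hNd
      · rw [hL0, zero_mul] at hb
        linarith [hb, hε.le]
      · have hXX₀ : X = X₀ := by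
          rcases Nat.mul_eq_zero.mp hNd with hN | hd
          · funext i; exact absurd i.isLt (by omega)
          · funext i α; exact absurd α.isLt (by omega)
        rw [hXX₀, sub_self, abs_zero]
        exact hε.le
    · have : (0:ℝ) ≤ 1 * 2 ^ N * L ^ (N * d) / (ε ^ (N * d) * (Nat.factorial N)) := by
        positivity
      simpa using this
  · push_neg at hdeg
    obtain ⟨hL0, hNd⟩ := hdeg
    have hLpos : 0 < L := lt_of_le_of_ne hL (Ne.symm hL0)
    have hNpos : 0 < N := Nat.pos_of_ne_zero (fun h => hNd (by simp [h]))
    refine ⟨2 ^ d * Nat.factorial N, by positivity, L, hLpos, fun ε hε hεL => ?_⟩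
    set K : ℕ := ⌈L / ε⌉₊ with hKdef
    have hLε1 : 1 ≤ L / ε := (one_le_div hε).mpr hεL.le
    have hK0 : 0 < K := Nat.ceil_pos.mpr (by linarith)
    have hKR : (0:ℝ) < K := by exact_mod_cast hK0
    have hKge : L / ε ≤ K := Nat.le_ceil _
    have hKle : (K : ℝ) ≤ 2 * (L / ε) := by
      have h1 : (K : ℝ) < L / ε + 1 := Nat.ceil_lt_add_one (by linarith)
      linarith
    -- setup the encoding
    have hcard : Fintype.card (Fin d → Fin K) = K ^ d := by
      simp [Fintype.card_fun]
    set ι : (Fin d → Fin K) ≃ Fin (K ^ d) := Fintype.equivFinOfCardEq hcard with hιdef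
    set R : (Fin d → ℝ) → (Fin d → Fin K) := fun x α =>
      ⟨min ⌊x α * K⌋₊ (K - 1), lt_of_le_of_lt (min_le_right _ _) (Nat.sub_lt hK0 one_pos)⟩
      with hRdef
    set g : (Fin d → ℝ) → Fin (K ^ d) → ℝ := fun x m => if ι (R x) = m then 1 else 0
      with hgdef
    set P : (Fin (K ^ d) → ℝ) → Prop := fun s => ∃ X' : Fin N → Fin d → ℝ,
      (∀ i α, X' i α ∈ Set.Icc (0:ℝ) 1) ∧ (∑ j, g (X' j)) = s with hPdef
    refine ⟨K ^ d, g, fun s => if h : P s then f h.choose else 0, ?_, ?_⟩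
    · intro X hX
      have hPX : P (∑ j, g (X j)) := ⟨X, hX, rfl⟩
      simp only [dif_pos hPX]
      obtain ⟨hX', hsum⟩ := hPX.choose_spec
      set X' := hPX.choose with hX'def
      -- from equal sums, equal counts
      have hcount : ∀ m : Fin (K ^ d),
          (Finset.univ.filter fun j => ι (R (X j)) = m).card
            = (Finset.univ.filter fun j => ι (R (X' j)) = m).card := by
        intro m
        have := congrFun hsum m
        rw [Finset.sum_apply, Finset.sum_apply] at this
        simp only [hgdef] at this
        rw [Finset.sum_boole, Finset.sum_boole] at this
        exact_mod_cast this.symm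
      obtain ⟨σ, hσ⟩ := exists_perm_of_card_eq (fun j => ι (R (X j)))
        (fun j => ι (R (X' j))) hcount
      have hR : ∀ j, R (X' (σ j)) = R (X j) := by
        intro j
        exact ι.injective (congrFun hσ j)
      have hXσcube : ∀ i α, (X' ∘ σ) i α ∈ Set.Icc (0:ℝ) 1 := fun i α => hX' (σ i) α
      have hfX' : f (X' ∘ σ) = f X' := hsym σ X' hX'
      rw [← hfX']
      have hnorm : ‖X - X' ∘ σ‖ ≤ 1 / K := by
        rw [pi_norm_le_iff_of_nonneg (by positivity)]
        intro i
        rw [pi_norm_le_iff_of_nonneg (by positivity)]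
        intro α
        have hRα : (R (X i) α : ℕ) = (R (X' (σ i)) α : ℕ) := by
          rw [hR i]
        simp only [hRdef] at hRα
        have := round_close hK0 (hX i α) (hX' (σ i) α) hRα
        simpa [Real.norm_eq_abs, Pi.sub_apply] using this
      calc |f X - f (X' ∘ σ)| ≤ L * ‖X - X' ∘ σ‖ := hlip X (X' ∘ σ) hX hXσcube
        _ ≤ L * (1 / K) := by
            exact mul_le_mul_of_nonneg_left hnorm hL
        _ ≤ ε := by
            rw [mul_one_div, div_le_iff₀ hKR]
            calc L = (L / ε) * ε := by field_simp
              _ ≤ K * ε := by nlinarith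
              _ = ε * K := mul_comm _ _
    · -- cardinality bound
      have hM : ((K ^ d : ℕ) : ℝ) = (K : ℝ) ^ d := by push_cast; ring
      have step1 : ((K ^ d : ℕ) : ℝ) ≤ 2 ^ d * (L / ε) ^ d := by
        rw [hM]
        calc (K : ℝ) ^ d ≤ (2 * (L / ε)) ^ d :=
              pow_le_pow_left₀ hKR.le hKle d
          _ = 2 ^ d * (L / ε) ^ d := mul_pow _ _ _
      have step2 : (L / ε) ^ d ≤ (L / ε) ^ (N * d) :=
        pow_le_pow_right₀ hLε1 (Nat.le_mul_of_pos_left d hNpos)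
      have hrhs : (2:ℝ) ^ d * (Nat.factorial N) * 2 ^ N * L ^ (N * d)
          / (ε ^ (N * d) * (Nat.factorial N)) = 2 ^ d * 2 ^ N * (L / ε) ^ (N * d) := by
        rw [div_pow]
        have hfac : (0:ℝ) < (Nat.factorial N : ℝ) := by
          exact_mod_cast Nat.factorial_pos N
        field_simp
      rw [hrhs]
      have h2N : (1:ℝ) ≤ 2 ^ N := one_le_pow₀ (by norm_num)
      calc ((K ^ d : ℕ) : ℝ) ≤ 2 ^ d * (L / ε) ^ d := step1
        _ ≤ 2 ^ d * (L / ε) ^ (N * d) := by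
            have h2d : (0:ℝ) ≤ 2 ^ d := by positivity
            nlinarith
        _ ≤ 2 ^ d * 2 ^ N * (L / ε) ^ (N * d) := by
            have h2d : (0:ℝ) ≤ 2 ^ d := by positivity
            have hp : (0:ℝ) ≤ (L / ε) ^ (N * d) := by positivity
            exact mul_le_mul_of_nonneg_right (le_mul_of_one_le_right h2d h2N) hp
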